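/- Let v_1, …, v_{d+1} ∈ ℝ^d be affinely independent points with positive orientation, let w ∈ ℝ^d, and set V = {v_1, …, v_{d+1}}. Then for every Q ∈ S^d the sign of the (d+2)×(d+2) determinant whose first row is (1, …, 1, 1), whose next d rows are the columns v_1, …, v_{d+1}, w, and whose last row is (Q[v_1], …, Q[v_{d+1}], Q[w]), equals the sign of ⟨Q, N_{V,w}⟩. -/

import Mathlib

open Matrix Finset MeasureTheory Polynomial

noncomputable section

namespace Vor

variable {d : ℕ}

/-- The space of real `d × d` matrices (quadratic forms live in the symmetric ones). -/
abbrev Md (d : ℕ) := Matrix (Fin d) (Fin d) ℝ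

/-- Trace inner product `⟨A, B⟩ = trace (A * B)` on matrices. -/
def minner (A B : Md d) : ℝ := (A * B).trace

/-- The quadratic form `Q[x] = xᵗ Q x`. -/
def qf (Q : Md d) (x : Fin d → ℝ) : ℝ := x ⬝ᵥ Q.mulVec x

/-- The real vector associated to an integral vector. -/
def intVec (v : Fin d → ℤ) : Fin d → ℝ := fun j => (v j : ℝ)

/-- The lattice `ℤ^d` viewed inside `ℝ^d`. -/
def latticeZ (d : ℕ) : Set (Fin d → ℝ) := Set.range (intVec (d := d))

/-- A standard periodic set `Λ = ⋃ i, (tᵢ + ℤ^d)`. -/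
def IsStdPeriodic (Λ : Set (Fin d → ℝ)) : Prop :=
  ∃ m : ℕ, 0 < m ∧ ∃ t : Fin m → (Fin d → ℝ),
    Λ = {x | ∃ (i : Fin m) (v : Fin d → ℤ), x = t i + intVec v}

/-- The real matrix obtained from an integral matrix. -/
def rmat (U : Matrix (Fin d) (Fin d) ℤ) : Md d := U.map fun z => (z : ℝ)

/-- `U ∈ GL_d(ℤ)`. -/
def IsUnimodular (U : Matrix (Fin d) (Fin d) ℤ) : Prop := IsUnit U.det

/-- The action `Q ↦ Uᵗ Q U`. -/
def conjQ (U : Matrix (Fin d) (Fin d) ℤ) (Q : Md d) : Md d := (rmat U)ᵀ * Q * rmat U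

/-- The action of `GL_d(ℤ)` on subsets of the space of forms. -/
def conjSet (U : Matrix (Fin d) (Fin d) ℤ) (S : Set (Md d)) : Set (Md d) := conjQ U '' S

/-- The rational closure `S̃^d_{≥0}`: positive semidefinite forms that are
`GL_d(ℤ)`-equivalent to a block diagonal form with a zero block and a positive
definite block. -/
def RationalClosure (d : ℕ) : Set (Md d) :=
  {Q | Q.PosSemidef ∧ ∃ U : Matrix (Fin d) (Fin d) ℤ, IsUnimodular U ∧ ∃ k : ℕ, k ≤ d ∧
    (∀ i j : Fin d, ((i : ℕ) < k ∨ (j : ℕ) < k) → conjQ U Q i j = 0) ∧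
    (∀ x : Fin d → ℝ, (∀ i : Fin d, (i : ℕ) < k → x i = 0) → x ≠ 0 → 0 < qf (conjQ U Q) x)}

/-- `P` is a Delone polyhedron of the form `Q` with respect to the point set `Λ`:
`P` is the convex hull of the set `S` of points of `Λ` lying on some sphere
(center `c`, radius `r`) which contains no other point of `Λ` on it or inside. -/
def IsDelonePoly (Λ : Set (Fin d → ℝ)) (Q : Md d) (P : Set (Fin d → ℝ)) : Prop :=
  ∃ S : Set (Fin d → ℝ), S ⊆ Λ ∧ S.Nonempty ∧ P = convexHull ℝ S ∧
    ∃ (c : Fin d → ℝ) (r : ℝ),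
      (∀ v ∈ S, qf Q (c - v) = r ^ 2) ∧ ∀ v ∈ Λ, v ∉ S → r ^ 2 < qf Q (c - v)

/-- The Delone subdivision of `Q` with respect to `Λ`. -/
def DelSub (Λ : Set (Fin d → ℝ)) (Q : Md d) : Set (Set (Fin d → ℝ)) :=
  {P | IsDelonePoly Λ Q P}

/-- The secondary cone of a (Delone) subdivision `D`:
all forms in the rational closure whose Delone subdivision is `D`. -/
def SecCone (Λ : Set (Fin d → ℝ)) (D : Set (Set (Fin d → ℝ))) : Set (Md d) :=
  {Q | Q ∈ RationalClosure d ∧ DelSub Λ Q = D}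

/-- `α` gives the coefficients of an affine combination of the points of `V` representing `w`. -/
def IsAffComb (V : Finset (Fin d → ℝ)) (α : (Fin d → ℝ) → ℝ) (w : Fin d → ℝ) : Prop :=
  (∑ v ∈ V, α v) = 1 ∧ (∑ v ∈ V, α v • v) = w

/-- The form `N_{V,w} = wwᵗ - ∑_{v ∈ V} α_v vvᵗ`. -/
def Nform (V : Finset (Fin d → ℝ)) (α : (Fin d → ℝ) → ℝ) (w : Fin d → ℝ) : Md d :=
  vecMulVec w w - ∑ v ∈ V, α v • vecMulVec v v

/-- A finite set of points is affinely independent. -/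
def AffIndep (V : Finset (Fin d → ℝ)) : Prop :=
  AffineIndependent ℝ (fun v : {x // x ∈ V} => (v : Fin d → ℝ))

/-- Insertion into a finset (classical, to avoid decidability assumptions). -/
def finsert (w : Fin d → ℝ) (V : Finset (Fin d → ℝ)) : Finset (Fin d → ℝ) :=
  letI := Classical.decEq (Fin d → ℝ)
  insert w V

/-- A polyhedron: a finite intersection of closed halfspaces. -/
def IsPolyhedron (P : Set (Fin d → ℝ)) : Prop :=
  ∃ (n : ℕ) (a : Fin n → (Fin d → ℝ)) (b : Fin n → ℝ), P = {x | ∀ i, a i ⬝ᵥ x ≤ b i}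

/-- `F` is a face of `P` (cut out by a supporting hyperplane). -/
def IsFaceOf (F P : Set (Fin d → ℝ)) : Prop :=
  ∃ (a : Fin d → ℝ) (b : ℝ), (∀ x ∈ P, a ⬝ᵥ x ≤ b) ∧ F = {x ∈ P | a ⬝ᵥ x = b}

/-- The (affine) dimension of a set of points. -/
def sdim (S : Set (Fin d → ℝ)) : ℕ := Module.finrank ℝ ↥(vectorSpan ℝ S)

/-- A (face-to-face) polyhedral subdivision of `ℝ^d`. -/
def IsPolySubdiv (D : Set (Set (Fin d → ℝ))) : Prop :=
  (∀ P ∈ D, IsPolyhedron P ∧ P.Nonempty) ∧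
  ⋃₀ D = Set.univ ∧
  (∀ P ∈ D, ∀ F : Set (Fin d → ℝ), IsFaceOf F P → F.Nonempty → F ∈ D) ∧
  ∀ P ∈ D, ∀ P' ∈ D, (P ∩ P').Nonempty → IsFaceOf (P ∩ P') P

/-- `D` has vertex-set `Λ`: every member is the convex hull of its points of `Λ`. -/
def HasVertexSet (Λ : Set (Fin d → ℝ)) (D : Set (Set (Fin d → ℝ))) : Prop :=
  ∀ P ∈ D, P = convexHull ℝ (Λ ∩ P)

/-- A (closed) polyhedral cone in the space of matrices. -/
def IsPolyConeM (C : Set (Md d)) : Prop :=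
  ∃ (n : ℕ) (A : Fin n → Md d), C = {Q | ∀ i, 0 ≤ minner (A i) Q}

/-- `F` is a face of the cone `C` in the space of matrices. -/
def IsFaceOfM (F C : Set (Md d)) : Prop :=
  ∃ A : Md d, (∀ X ∈ C, 0 ≤ minner A X) ∧ F = {X ∈ C | minner A X = 0}

/-- A relatively open polyhedral cone: solutions of finitely many linear equalities and
strict linear inequalities. -/
def IsRelOpenPolyCone (C : Set (Md d)) : Prop :=
  ∃ (n m : ℕ) (A : Fin n → Md d) (B : Fin m → Md d),
    C = {Q | (∀ i, minner (A i) Q = 0) ∧ ∀ j, 0 < minner (B j) Q}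

/-- Condition (a): the linear equalities coming from the `d`-dimensional cells of `D`. -/
def condA (Λ : Set (Fin d → ℝ)) (D : Set (Set (Fin d → ℝ))) (Q : Md d) : Prop :=
  ∀ P ∈ D, sdim P = d →
    ∀ V : Finset (Fin d → ℝ), (↑V : Set (Fin d → ℝ)) ⊆ Λ ∩ P → AffIndep V → V.card = d + 1 →
      ∀ w ∈ Λ ∩ P, ∀ α : (Fin d → ℝ) → ℝ, IsAffComb V α w →
        minner (Nform V α w) Q = 0

/-- Condition (b): the linear strict inequalities coming from the `(d-1)`-dimensional
cells of `D`. -/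
def condB (Λ : Set (Fin d → ℝ)) (D : Set (Set (Fin d → ℝ))) (Q : Md d) : Prop :=
  ∀ F ∈ D, sdim F = d - 1 →
    ∀ P ∈ D, ∀ P' ∈ D, sdim P = d → sdim P' = d → P ≠ P' → F = P ∩ P' →
      ∀ V : Finset (Fin d → ℝ), (↑V : Set (Fin d → ℝ)) ⊆ Λ ∩ F → AffIndep V → V.card = d →
        ∀ w ∈ (Λ ∩ P) \ F, ∀ w' ∈ (Λ ∩ P') \ F,
          ∀ α : (Fin d → ℝ) → ℝ, IsAffComb (finsert w V) α w' →
            0 < minner (Nform (finsert w V) α w') Q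

/-- The lifting map `w_Q(x) = (x, Q[x]) ∈ ℝ^{d+1}`. -/
def liftQ (Q : Md d) (x : Fin d → ℝ) : Fin (d + 1) → ℝ := Fin.snoc x (qf Q x)

/-- Projection `ℝ^{d+1} → ℝ^d` onto the first `d` coordinates. -/
def projd (y : Fin (d + 1) → ℝ) : Fin d → ℝ := fun i => y i.castSucc

/-- `G` is a finite subgroup of `GL_d(ℤ)` (given as a set of integral matrices). -/
def IsFinMatGroup (G : Set (Matrix (Fin d) (Fin d) ℤ)) : Prop :=
  G.Finite ∧ (1 : Matrix (Fin d) (Fin d) ℤ) ∈ G ∧ (∀ g ∈ G, IsUnimodular g) ∧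
    (∀ g ∈ G, ∀ h ∈ G, g * h ∈ G) ∧ ∀ g ∈ G, g⁻¹ ∈ G

/-- The space of invariant forms `F(G)` of `G ≤ GL_d(ℤ)`. -/
def FG (G : Set (Matrix (Fin d) (Fin d) ℤ)) : Set (Md d) :=
  {Q | Q.IsSymm ∧ ∀ g ∈ G, conjQ g Q = Q}

/-- The Bravais group `B(G)`: the pointwise stabilizer of `F(G)` in `GL_d(ℤ)`. -/
def BG (G : Set (Matrix (Fin d) (Fin d) ℤ)) : Set (Matrix (Fin d) (Fin d) ℤ) :=
  {g | IsUnimodular g ∧ ∀ Q ∈ FG G, conjQ g Q = Q}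

/-- The normalizer `N(B(G))` of the Bravais group in `GL_d(ℤ)`. -/
def NBG (G : Set (Matrix (Fin d) (Fin d) ℤ)) : Set (Matrix (Fin d) (Fin d) ℤ) :=
  {n | IsUnimodular n ∧ ∀ b : Matrix (Fin d) (Fin d) ℤ, b ∈ BG G ↔ n⁻¹ * b * n ∈ BG G}

/-- The inhomogeneous minimum `μ(Q) = sup_x inf_{v ∈ ℤ^d} Q[x - v]`. -/
def InhomMin (Q : Md d) : ℝ :=
  ⨆ x : Fin d → ℝ, ⨅ v : Fin d → ℤ, qf Q (x - intVec v)

/-- The bilinear form `(x, y) = xᵗ Q y` associated to `Q`. -/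
def bip (Q : Md d) (x y : Fin d → ℝ) : ℝ := x ⬝ᵥ Q.mulVec y

/-- `F` is a facet of the subdivision `D`: a `(d-1)`-dimensional cell, the intersection of
two adjacent `d`-dimensional cells. -/
def IsFacetOfSubdiv (D : Set (Set (Fin d → ℝ))) (F : Set (Fin d → ℝ)) : Prop :=
  F ∈ D ∧ sdim F = d - 1 ∧
    ∃ P ∈ D, ∃ P' ∈ D, sdim P = d ∧ sdim P' = d ∧ P ≠ P' ∧ F = P ∩ P'

/-- The linear subspace `U` of forms satisfying all equalities of the secondary cone of `D`. -/
def UD (Λ : Set (Fin d → ℝ)) (D : Set (Set (Fin d → ℝ))) : Set (Md d) :=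
  {X | X.IsSymm ∧ condA Λ D X}

/-- `ND` assigns to each facet `F` of `D` the form `N_{D,F}`: the unit-norm form in `U`
such that the projection onto `U` of every form `N_{V∪{w},w'}` attached to `F` is a
positive multiple of it. -/
def IsNDassign (Λ : Set (Fin d → ℝ)) (D : Set (Set (Fin d → ℝ)))
    (ND : Set (Fin d → ℝ) → Md d) : Prop :=
  ∀ F, IsFacetOfSubdiv D F → ND F ∈ UD Λ D ∧ minner (ND F) (ND F) = 1 ∧
    ∀ P ∈ D, ∀ P' ∈ D, sdim P = d → sdim P' = d → P ≠ P' → F = P ∩ P' →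
      ∀ V : Finset (Fin d → ℝ), (↑V : Set (Fin d → ℝ)) ⊆ Λ ∩ F → AffIndep V → V.card = d →
        ∀ w ∈ (Λ ∩ P) \ F, ∀ w' ∈ (Λ ∩ P') \ F,
          ∀ α : (Fin d → ℝ) → ℝ, IsAffComb (finsert w V) α w' →
            ∃ β : ℝ, 0 < β ∧ ∀ X ∈ UD Λ D,
              minner (Nform (finsert w V) α w') X = β * minner (ND F) X

/-- The set `R_F` of facets of `D` whose form `N_{D,F'}` projects onto `T` to a positive
multiple of `NF`. -/
def RFset (Λ : Set (Fin d → ℝ)) (D : Set (Set (Fin d → ℝ)))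
    (ND : Set (Fin d → ℝ) → Md d) (T : Set (Md d)) (NF : Md d) :
    Set (Set (Fin d → ℝ)) :=
  {F | IsFacetOfSubdiv D F ∧ ∃ γ : ℝ, 0 < γ ∧ ∀ X ∈ T, minner (ND F) X = γ * minner NF X}

/-- The chain relation on the facets of `R_F`: connected by a chain of adjacent
`d`-dimensional cells of `D`. -/
def FlipRel (D RFs : Set (Set (Fin d → ℝ))) (F1 F2 : Set (Fin d → ℝ)) : Prop :=
  ∃ (n : ℕ) (Fch : Fin (n + 1) → Set (Fin d → ℝ)) (Pch : Fin (n + 2) → Set (Fin d → ℝ)),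
    Fch 0 = F1 ∧ Fch (Fin.last n) = F2 ∧ (∀ i, Fch i ∈ RFs) ∧
    ∀ i : Fin (n + 1), Pch i.castSucc ∈ D ∧ Pch i.succ ∈ D ∧
      sdim (Pch i.castSucc) = d ∧ sdim (Pch i.succ) = d ∧
      Fch i = Pch i.castSucc ∩ Pch i.succ

/-- `C` is an equivalence class of the chain relation on `RFs`. -/
def IsEqClass (D RFs C : Set (Set (Fin d → ℝ))) : Prop :=
  C ⊆ RFs ∧ C.Nonempty ∧ ∀ F1 ∈ C, ∀ F2 ∈ RFs, (FlipRel D RFs F1 F2 ↔ F2 ∈ C)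

/-- The vertex set `V_C` of an equivalence class `C`: all vertices of `d`-dimensional
cells of `D` having a facet in `C`. -/
def VCset (Λ : Set (Fin d → ℝ)) (D C : Set (Set (Fin d → ℝ))) : Set (Fin d → ℝ) :=
  {x | ∃ P ∈ D, sdim P = d ∧ (∃ F ∈ C, IsFaceOf F P) ∧ x ∈ Λ ∩ P}

/-- A lower facet of a set in `ℝ^{d+1}`: a facet whose outer normal has negative last
coordinate. -/
def IsLowerFacet (S F : Set (Fin (d + 1) → ℝ)) : Prop :=
  ∃ (a : Fin (d + 1) → ℝ) (b : ℝ), (∀ x ∈ S, a ⬝ᵥ x ≤ b) ∧ F = {x ∈ S | a ⬝ᵥ x = b} ∧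
    Module.finrank ℝ ↥(vectorSpan ℝ F) = d ∧ a (Fin.last d) < 0

/-- An upper facet of a set in `ℝ^{d+1}`: a facet whose outer normal has positive last
coordinate. -/
def IsUpperFacet (S F : Set (Fin (d + 1) → ℝ)) : Prop :=
  ∃ (a : Fin (d + 1) → ℝ) (b : ℝ), (∀ x ∈ S, a ⬝ᵥ x ≤ b) ∧ F = {x ∈ S | a ⬝ᵥ x = b} ∧
    Module.finrank ℝ ↥(vectorSpan ℝ F) = d ∧ 0 < a (Fin.last d)

/-- The `(d+2) × (d+2)` matrix of the chirotope: first row all ones, next `d` rows the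
coordinates of the points, last row the values of the quadratic form. -/
def chiMat (d : ℕ) (Q : Md d) (p : Fin (d + 2) → (Fin d → ℝ)) :
    Matrix (Fin (d + 2)) (Fin (d + 2)) ℝ :=
  Matrix.of fun i j =>
    if hi : (i : ℕ) = 0 then 1
    else if hi' : (i : ℕ) < d + 1 then p j ⟨(i : ℕ) - 1, by omega⟩
    else qf Q (p j)

/-- The `(d+1) × (d+1)` orientation matrix whose columns are `(1, vⱼ)`. -/
def oriMat (d : ℕ) (v : Fin (d + 1) → (Fin d → ℝ)) :
    Matrix (Fin (d + 1)) (Fin (d + 1)) ℝ :=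
  Matrix.of fun i j =>
    if hi : (i : ℕ) = 0 then 1
    else v j ⟨(i : ℕ) - 1, by have := i.isLt; omega⟩

/-- The vertex set `{v₁, …, v_{d+1}}` as a finset (classical). -/
def vertsOf (d : ℕ) (v : Fin (d + 1) → (Fin d → ℝ)) : Finset (Fin d → ℝ) :=
  letI := Classical.decEq (Fin d → ℝ)
  Finset.image v Finset.univ

lemma trace_mul_vecMulVec (Q : Md d) (x : Fin d → ℝ) :
    (Q * vecMulVec x x).trace = qf Q x := by
  simp only [Matrix.trace, Matrix.diag, Matrix.mul_apply, vecMulVec_apply, qf, dotProduct,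
    Matrix.mulVec, Finset.mul_sum]
  refine Finset.sum_congr rfl fun i _ => Finset.sum_congr rfl fun j _ => by ring

lemma minner_Nform (Q : Md d) (V : Finset (Fin d → ℝ)) (α : (Fin d → ℝ) → ℝ) (w : Fin d → ℝ) :
    minner Q (Nform V α w) = qf Q w - ∑ u ∈ V, α u * qf Q u := by
  unfold minner Nform
  rw [Matrix.mul_sub, Matrix.trace_sub, Finset.mul_sum, Matrix.trace_sum, trace_mul_vecMulVec]
  congr 1
  refine Finset.sum_congr rfl fun u _ => ?_
  rw [mul_smul_comm, Matrix.trace_smul, trace_mul_vecMulVec, smul_eq_mul]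

/-- For positively oriented affinely independent points
`v₁, …, v_{d+1}` and any point `w`, the sign of the chirotope determinant equals the
sign of `⟨Q, N_{V,w}⟩`. -/
theorem statement5 (d : ℕ) (Q : Md d) (hQ : Q.IsSymm)
    (v : Fin (d + 1) → (Fin d → ℝ)) (hv : AffineIndependent ℝ v)
    (hori : 0 < (oriMat d v).det) (w : Fin d → ℝ)
    (α : (Fin d → ℝ) → ℝ) (hα : IsAffComb (vertsOf d v) α w) :
    Real.sign (chiMat d Q (Fin.snoc v w)).det =
      Real.sign (minner Q (Nform (vertsOf d v) α w)) := by
  classical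
  have hinj : Function.Injective v := hv.injective
  -- translate the affine combination to sums over `Fin (d+1)`
  have key : ∀ {β : Type} [inst : AddCommMonoid β], ∀ g : (Fin d → ℝ) → β,
      ∑ u ∈ vertsOf d v, g u = ∑ j : Fin (d + 1), g (v j) := by
    intro β inst g
    letI := Classical.decEq (Fin d → ℝ)
    unfold vertsOf
    exact Finset.sum_image fun a _ b _ h => hinj h
  have hsum1 : (∑ j : Fin (d + 1), α (v j)) = 1 := by
    have := hα.1; rwa [key] at this
  have hsum2 : (∑ j : Fin (d + 1), α (v j) • v j) = w := by
    have := hα.2; rwa [key (fun u => α u • u)] at this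
  set s : ℝ := ∑ j : Fin (d + 1), α (v j) * qf Q (v j) with hs
  set t : ℝ := qf Q w - s with ht
  have hmin : minner Q (Nform (vertsOf d v) α w) = t := by
    rw [minner_Nform, ht, hs, key (fun u => α u * qf Q u)]
  set M := chiMat d Q (Fin.snoc v w) with hM
  set lst : Fin (d + 2) := Fin.last (d + 1) with hlst
  -- the coefficient vector for the column combination
  set c : Fin (d + 2) → ℝ := fun i => if h : (i : ℕ) < d + 1 then α (v ⟨i, h⟩) else 0 with hc
  have hclast : c lst = 0 := by simp [hc, hlst]
  have hccast : ∀ j : Fin (d + 1), c j.castSucc = α (v j) := by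
    intro j; simp [hc, j.isLt]; intro h; exact absurd h (by have := j.isLt; omega)
  -- entries of M
  have hMcast : ∀ i : Fin (d + 2), ∀ j : Fin (d + 1), M i j.castSucc =
      if hi : (i : ℕ) = 0 then 1
      else if hi' : (i : ℕ) < d + 1 then v j ⟨(i : ℕ) - 1, by omega⟩
      else qf Q (v j) := by
    intro i j
    simp only [hM, chiMat, Matrix.of_apply, Fin.snoc_castSucc]
  have hMlast : ∀ i : Fin (d + 2), M i lst =
      if hi : (i : ℕ) = 0 then 1
      else if hi' : (i : ℕ) < d + 1 then w ⟨(i : ℕ) - 1, by omega⟩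
      else qf Q w := by
    intro i
    simp only [hM, chiMat, Matrix.of_apply, hlst, Fin.snoc_last]
  -- decompose the last column
  have hcol : (fun i => M i lst) =
      (fun i => ∑ k : Fin (d + 2), c k • M i k) + Pi.single lst t := by
    funext i
    have hsplit : (∑ k : Fin (d + 2), c k • M i k)
        = ∑ j : Fin (d + 1), α (v j) * M i j.castSucc := by
      rw [Fin.sum_univ_castSucc]
      simp only [hccast]
      rw [show Fin.last (d+1) = lst from rfl, hclast]
      simp [smul_eq_mul]
    induction i using Fin.lastCases with
    | last =>
      rw [Pi.add_apply, hsplit, Pi.single_eq_same]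
      have h1 : M (Fin.last (d+1)) lst = qf Q w := by
        rw [hMlast]; simp
      have h2 : ∀ j : Fin (d+1), M (Fin.last (d+1)) j.castSucc = qf Q (v j) := by
        intro j; rw [hMcast]; simp
      rw [h1]
      simp only [h2]
      rw [ht, hs]; ring
    | cast i' =>
      have hlt : ((i'.castSucc : Fin (d+2)) : ℕ) < d + 1 := i'.isLt
      have hne : i'.castSucc ≠ lst := by
        rw [hlst]; exact (Fin.castSucc_lt_last i').ne
      rw [Pi.add_apply, hsplit, Pi.single_eq_of_ne hne, add_zero]
      rcases Nat.eq_zero_or_pos (i' : ℕ) with h0 | h0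
      · have h1 : M i'.castSucc lst = 1 := by rw [hMlast]; simp [h0]
        have h2 : ∀ j : Fin (d+1), M i'.castSucc j.castSucc = 1 := by
          intro j; rw [hMcast]; simp [h0]
        rw [h1]; simp only [h2, mul_one]; exact hsum1.symm
      · have h0' : ((i' : Fin (d+1)) : ℕ) ≠ 0 := h0.ne'
        have h1 : M i'.castSucc lst = w ⟨(i'.castSucc : ℕ) - 1, by omega⟩ := by
          rw [hMlast]; simp [h0', hlt, Fin.is_le i']
        have h2 : ∀ j : Fin (d+1), M i'.castSucc j.castSucc = v j ⟨(i'.castSucc : ℕ) - 1, by omega⟩ := by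
          intro j; rw [hMcast]; simp [h0', hlt, Fin.is_le i']
        rw [h1, ← hsum2]
        simp only [h2, Finset.sum_apply, Pi.smul_apply, smul_eq_mul]
  -- determinant computation
  have hdet : M.det = t * (oriMat d v).det := by
    conv_lhs => rw [← Matrix.updateCol_eq_self M lst, hcol]
    rw [Matrix.det_updateCol_add]
    have e1 : (M.updateCol lst fun i => ∑ k : Fin (d+2), c k • M i k).det = 0 := by
      rw [Matrix.det_updateCol_sum, hclast, zero_smul]
    rw [e1, zero_add]
    have e2 : (Pi.single lst t : Fin (d+2) → ℝ) = t • (Pi.single lst 1 : Fin (d+2) → ℝ) := by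
      funext i
      rcases eq_or_ne i lst with h | h
      · subst h; simp
      · simp [Pi.single_eq_of_ne h]
    rw [e2, Matrix.det_updateCol_smul]
    congr 1
    -- expand along the last column
    set N := M.updateCol lst (Pi.single lst (1:ℝ)) with hN
    rw [Matrix.det_succ_column N lst]
    have hNcol : ∀ i, N i lst = (Pi.single lst 1 : Fin (d+2) → ℝ) i := by
      intro i; rw [hN]; exact Matrix.updateCol_self ..
    rw [Finset.sum_eq_single lst]
    · have : N lst lst = 1 := by rw [hNcol]; simp
      rw [this]
      have hE : (-1 : ℝ) ^ ((lst : ℕ) + (lst : ℕ)) = 1 := by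
        rw [← two_mul, pow_mul]; norm_num
      rw [hE, mul_one, one_mul]
      congr 1
      funext i j
      have : lst.succAbove = Fin.castSucc := by
        rw [hlst]; exact Fin.succAbove_last
      rw [Matrix.submatrix_apply, this, hN]
      rw [Matrix.updateCol_ne (show j.castSucc ≠ lst from (Fin.castSucc_lt_last j).ne)]
      rw [hMcast i.castSucc j]
      simp only [oriMat, Matrix.of_apply]
      rcases Nat.eq_zero_or_pos (i : ℕ) with h0 | h0
      · simp [h0]
      · simp [h0.ne', i.isLt]
    · intro b _ hb
      have : N b lst = 0 := by rw [hNcol]; exact Pi.single_eq_of_ne hb _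
      rw [this]; ring
    · simp
  rw [hmin, hdet]
  rcases lt_trichotomy t 0 with h | h | h
  · rw [Real.sign_of_neg h, Real.sign_of_neg (mul_neg_of_neg_of_pos h hori)]
  · rw [h, zero_mul, Real.sign_zero]
  · rw [Real.sign_of_pos h, Real.sign_of_pos (mul_pos h hori)]


end Vor

end
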